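/- Let Cᵢ and Cⱼ be two disjoint maximal commuting Pauli classes in dimension d = 2ⁿ. Then: (a) every operator U ∈ Cᵢ commutes with exactly 2^{n−1} − 1 of the operators in Cⱼ; and (b) this set of 2^{n−1} − 1 operators determines U up to phase, i.e. if U, V ∈ Cᵢ commute with exactly the same subset of Cⱼ, then U and V are equal up to phase. -/

import Mathlib

open Matrix

noncomputable section

/-- Matrices on the Hilbert space of `n` qubits, with rows and columns indexed by
bit strings `Fin n → Fin 2`. -/
abbrev QMat (n : ℕ) := Matrix (Fin n → Fin 2) (Fin n → Fin 2) ℂ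

/-- The single-qubit identity. -/
def pI : Matrix (Fin 2) (Fin 2) ℂ := 1

/-- The single-qubit Pauli X. -/
def pX : Matrix (Fin 2) (Fin 2) ℂ := !![0, 1; 1, 0]

/-- The single-qubit Pauli Y. -/
def pY : Matrix (Fin 2) (Fin 2) ℂ := !![0, -Complex.I; Complex.I, 0]

/-- The single-qubit Pauli Z. -/
def pZ : Matrix (Fin 2) (Fin 2) ℂ := !![1, 0; 0, -1]

/-- The `n`-fold Kronecker product `W 0 ⊗ ⋯ ⊗ W (n-1)`, realized on indices
`Fin n → Fin 2`. -/
def kron (n : ℕ) (W : Fin n → Matrix (Fin 2) (Fin 2) ℂ) : QMat n :=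
  fun v w => ∏ j, W j (v j) (w j)

/-- `M` is an `n`-qubit Pauli operator: an `n`-fold Kronecker product of matrices
from `{I₂, X, Y, Z}`. -/
def IsPauliOp (n : ℕ) (M : QMat n) : Prop :=
  ∃ W : Fin n → Matrix (Fin 2) (Fin 2) ℂ,
    (∀ j, W j = pI ∨ W j = pX ∨ W j = pY ∨ W j = pZ) ∧ M = kron n W

/-- Two matrices are equal up to phase if one is a nonzero scalar multiple of the other. -/
def PhaseEq {m : Type*} (A B : Matrix m m ℂ) : Prop := ∃ c : ℂ, c ≠ 0 ∧ A = c • B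

/-- A maximal commuting Pauli class in dimension `d = 2 ^ n`: a set of `d - 1`
pairwise commuting non-identity `n`-qubit Pauli operators, pairwise distinct up to phase. -/
def IsMaxClass (n : ℕ) (C : Set (QMat n)) : Prop :=
  C.Finite ∧ C.ncard = 2 ^ n - 1 ∧
  (∀ U ∈ C, IsPauliOp n U ∧ U ≠ 1) ∧
  (∀ U ∈ C, ∀ V ∈ C, U * V = V * U) ∧
  (∀ U ∈ C, ∀ V ∈ C, U ≠ V → ¬ PhaseEq U V)

/-- Two classes are disjoint if no member of one is equal up to phase to a member of the other. -/
def ClassDisjoint {n : ℕ} (C D : Set (QMat n)) : Prop :=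
  ∀ U ∈ C, ∀ V ∈ D, ¬ PhaseEq U V

/-- Two classes are equal up to phase (as sets of operators). -/
def ClassPhaseEq {n : ℕ} (C D : Set (QMat n)) : Prop :=
  (∀ U ∈ C, ∃ V ∈ D, PhaseEq U V) ∧ (∀ V ∈ D, ∃ U ∈ C, PhaseEq U V)

/-- The standard Hermitian inner product on `ι → ℂ` (conjugate-linear in the first slot). -/
def cinner {ι : Type*} [Fintype ι] (x y : ι → ℂ) : ℂ :=
  ∑ k, (starRingEnd ℂ) (x k) * y k

/-! ### Auxiliary material -/

abbrev V2 := ZMod 2 × ZMod 2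

def pM (a : V2) : Matrix (Fin 2) (Fin 2) ℂ :=
  if a = (0,0) then pI else if a = (1,0) then pX else if a = (0,1) then pZ else pY

lemma V2_cases : ∀ a : V2, a = (0,0) ∨ a = (1,0) ∨ a = (0,1) ∨ a = (1,1) := by decide

lemma pM_sq (a : V2) : pM a * pM a = 1 := by
  rcases V2_cases a with h|h|h|h <;> subst h <;>
    simp +decide only [pM] <;>
    ext i j <;> fin_cases i <;> fin_cases j <;>
    simp [pI, pX, pY, pZ, Matrix.mul_apply, Fin.sum_univ_two, Matrix.one_apply,
      Complex.I_mul_I]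

lemma trace_pM_mul (a b : V2) :
    (pM a * pM b).trace = if a = b then 2 else 0 := by
  rcases V2_cases a with h|h|h|h <;> rcases V2_cases b with h'|h'|h'|h' <;> subst h <;> subst h' <;>
    simp +decide only [pM] <;>
    simp [pI, pX, pY, pZ, Matrix.trace_fin_two, Matrix.mul_apply, Fin.sum_univ_two,
      Matrix.one_apply, Complex.I_mul_I] <;> ring_nf <;> simp [Complex.I_sq]

def sgn (a b : V2) : ℂ := if a.1 * b.2 + a.2 * b.1 = 0 then 1 else -1

lemma pM_commrel (a b : V2) : pM a * pM b = sgn a b • (pM b * pM a) := by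
  rcases V2_cases a with h|h|h|h <;> rcases V2_cases b with h'|h'|h'|h' <;> subst h <;> subst h' <;>
    simp +decide only [pM, sgn] <;>
    ext i j <;> fin_cases i <;> fin_cases j <;>
    simp [pI, pX, pY, pZ, Matrix.mul_apply, Matrix.smul_apply, Fin.sum_univ_two,
      Matrix.one_apply, Complex.I_mul_I] <;> ring_nf <;> simp [Complex.I_sq]

lemma pM_zero : pM 0 = 1 := by simp +decide [pM, pI]

/-! ### Kron lemmas -/

lemma kron_mul (n : ℕ) (W W' : Fin n → Matrix (Fin 2) (Fin 2) ℂ) :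
    kron n W * kron n W' = kron n (fun j => W j * W' j) := by
  ext v w
  simp only [kron, Matrix.mul_apply]
  have := Finset.sum_prod_piFinset (ι := Fin n) (Finset.univ : Finset (Fin 2))
    (fun j x => W j (v j) x * W' j x (w j))
  simp only [Fintype.piFinset_univ] at this
  rw [← this]
  exact Finset.sum_congr rfl fun x _ => (Finset.prod_mul_distrib).symm

lemma kron_smul (n : ℕ) (c : Fin n → ℂ) (W : Fin n → Matrix (Fin 2) (Fin 2) ℂ) :
    kron n (fun j => c j • W j) = (∏ j, c j) • kron n W := by
  ext v w
  simp [kron, Finset.prod_mul_distrib]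

lemma kron_one (n : ℕ) : kron n (fun _ => (1 : Matrix (Fin 2) (Fin 2) ℂ)) = 1 := by
  ext v w
  simp only [kron, Matrix.one_apply]
  by_cases h : v = w
  · subst h; simp
  · rw [if_neg h]
    obtain ⟨j, hj⟩ := Function.ne_iff.mp h
    exact Finset.prod_eq_zero (Finset.mem_univ j) (by rw [if_neg hj])

lemma trace_kron (n : ℕ) (W : Fin n → Matrix (Fin 2) (Fin 2) ℂ) :
    (kron n W).trace = ∏ j, (W j).trace := by
  simp only [Matrix.trace, Matrix.diag, kron]
  have := Finset.sum_prod_piFinset (ι := Fin n) (Finset.univ : Finset (Fin 2))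
    (fun j x => W j x x)
  simp only [Fintype.piFinset_univ] at this
  rw [this]

/-! ### Pauli tuples -/

def kP (n : ℕ) (t : Fin n → V2) : QMat n := kron n (fun j => pM (t j))

lemma kP_mul_self (n : ℕ) (t : Fin n → V2) : kP n t * kP n t = 1 := by
  rw [kP, kron_mul]
  have : (fun j => pM (t j) * pM (t j)) = fun _ : Fin n => (1 : Matrix (Fin 2) (Fin 2) ℂ) := by
    funext j; exact pM_sq (t j)
  rw [this, kron_one]

lemma isUnit_kP (n : ℕ) (t : Fin n → V2) : IsUnit (kP n t) :=
  ⟨⟨kP n t, kP n t, kP_mul_self n t, kP_mul_self n t⟩, rfl⟩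

lemma kP_ne_zero (n : ℕ) (t : Fin n → V2) : kP n t ≠ 0 :=
  (isUnit_kP n t).ne_zero

lemma kP_zero (n : ℕ) : kP n 0 = 1 := by
  rw [kP]
  have : (fun j : Fin n => pM ((0 : Fin n → V2) j)) = fun _ => (1 : Matrix (Fin 2) (Fin 2) ℂ) := by
    funext j; exact pM_zero
  rw [this, kron_one]

lemma isPauliOp_iff {n : ℕ} (U : QMat n) : IsPauliOp n U ↔ ∃ t, U = kP n t := by
  constructor
  · rintro ⟨W, hW, rfl⟩
    have : ∀ j, ∃ a : V2, W j = pM a := by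
      intro j
      rcases hW j with h|h|h|h
      · exact ⟨(0,0), by simp +decide [pM, h]⟩
      · exact ⟨(1,0), by simp +decide [pM, h]⟩
      · exact ⟨(1,1), by simp +decide [pM, h]⟩
      · exact ⟨(0,1), by simp +decide [pM, h]⟩
    choose t ht using this
    have hW : W = fun j => pM (t j) := funext ht
    exact ⟨t, by rw [kP, ← hW]⟩
  · rintro ⟨t, rfl⟩
    refine ⟨fun j => pM (t j), fun j => ?_, rfl⟩
    rcases V2_cases (t j) with h|h|h|h <;> simp +decide [pM, h]

lemma zmod2_cases : ∀ x : ZMod 2, x = 0 ∨ x = 1 := by decide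

lemma sign_prod {n : ℕ} (e : Fin n → ZMod 2) :
    (∏ j, if e j = 0 then (1:ℂ) else -1) = if (∑ j, e j) = 0 then (1:ℂ) else -1 := by
  have h1 : ∀ x : ZMod 2, (if x = 0 then (1:ℂ) else -1) = (-1) ^ x.val := by
    intro x
    rcases zmod2_cases x with h|h <;> subst h <;> simp [ZMod.val_one]
  have h2 : (∑ j, e j) = ((∑ j, (e j).val : ℕ) : ZMod 2) := by
    push_cast
    exact Finset.sum_congr rfl fun j _ => (ZMod.natCast_rightInverse (e j)).symm
  rw [Finset.prod_congr rfl fun j _ => h1 (e j)]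
  rw [Finset.prod_pow_eq_pow_sum]
  by_cases h : (∑ j, e j) = 0
  · rw [if_pos h]
    rw [h2, ZMod.natCast_eq_zero_iff] at h
    exact Even.neg_one_pow (Nat.even_iff.mpr (Nat.mod_eq_zero_of_dvd h))
  · rw [if_neg h]
    rw [h2, ZMod.natCast_eq_zero_iff] at h
    exact Odd.neg_one_pow (Nat.odd_iff.mpr (Nat.two_dvd_ne_zero.mp h))

/-! ### The symplectic form -/

def omg {n : ℕ} (t t' : Fin n → V2) : ZMod 2 :=
  ∑ j, ((t j).1 * (t' j).2 + (t j).2 * (t' j).1)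

def BF (n : ℕ) : LinearMap.BilinForm (ZMod 2) (Fin n → V2) :=
  LinearMap.mk₂ (ZMod 2) omg
    (fun x y t => by
      simp only [omg, Pi.add_apply, Prod.fst_add, Prod.snd_add, ← Finset.sum_add_distrib]
      exact Finset.sum_congr rfl fun j _ => by ring)
    (fun c x t => by
      simp only [omg, Pi.smul_apply, Prod.smul_fst, Prod.smul_snd, smul_eq_mul, Finset.mul_sum]
      exact Finset.sum_congr rfl fun j _ => by ring)
    (fun x y t => by
      simp only [omg, Pi.add_apply, Prod.fst_add, Prod.snd_add, ← Finset.sum_add_distrib]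
      exact Finset.sum_congr rfl fun j _ => by ring)
    (fun c x t => by
      simp only [omg, Pi.smul_apply, Prod.smul_fst, Prod.smul_snd, smul_eq_mul, Finset.mul_sum]
      exact Finset.sum_congr rfl fun j _ => by ring)

lemma BF_apply {n : ℕ} (t t' : Fin n → V2) : BF n t t' = omg t t' := rfl

lemma BF_symm {n : ℕ} : (BF n).IsSymm := ⟨fun x y => by
  simp only [RingHom.id_apply, BF_apply, omg]
  exact Finset.sum_congr rfl fun j _ => by ring⟩

lemma BF_comm {n : ℕ} (x y : Fin n → V2) : BF n x y = BF n y x := by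
  have := (BF_symm (n := n)).eq x y
  simpa using this

lemma BF_self {n : ℕ} (t : Fin n → V2) : BF n t t = 0 := by
  simp only [BF_apply, omg]
  rw [Finset.sum_eq_zero]
  intro j _
  rw [mul_comm]
  exact CharTwo.add_self_eq_zero _

lemma BF_nondeg {n : ℕ} : (BF n).Nondegenerate := by
  suffices hL : ∀ u : Fin n → V2, (∀ v, BF n u v = 0) → u = 0 by
    exact ⟨hL, fun u hu => hL u fun v => by rw [BF_comm]; exact hu v⟩
  intro u hu
  funext j
  have h1 := hu (Pi.single j ((0:ZMod 2), (1:ZMod 2)))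
  have h2 := hu (Pi.single j ((1:ZMod 2), (0:ZMod 2)))
  simp only [BF_apply, omg] at h1 h2
  rw [Finset.sum_eq_single j (fun b _ hb => by simp [Pi.single_eq_of_ne hb])
    (fun h => absurd (Finset.mem_univ j) h)] at h1 h2
  simp at h1 h2
  ext
  · simpa using h1
  · simpa using h2

/-! ### Commutation and phase for Pauli tuples -/

lemma kP_commrel (n : ℕ) (t t' : Fin n → V2) :
    kP n t * kP n t' = (if omg t t' = 0 then (1:ℂ) else -1) • (kP n t' * kP n t) := by
  rw [kP, kP, kron_mul, kron_mul]
  have h1 : (fun j => pM (t j) * pM (t' j)) =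
      fun j => sgn (t j) (t' j) • (pM (t' j) * pM (t j)) := by
    funext j; exact pM_commrel (t j) (t' j)
  rw [h1, kron_smul]
  congr 1
  have := sign_prod (fun j => (t j).1 * (t' j).2 + (t j).2 * (t' j).1)
  simp only [sgn, omg]
  convert this
  exact if_congr Iff.rfl rfl rfl

lemma kP_comm_iff (n : ℕ) (t t' : Fin n → V2) :
    kP n t * kP n t' = kP n t' * kP n t ↔ omg t t' = 0 := by
  constructor
  · intro h
    by_contra hne
    rw [kP_commrel, if_neg hne, neg_smul, one_smul] at h
    have h0 : (2 : ℂ) • (kP n t' * kP n t) = 0 := by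
      have := congrArg (· + (kP n t' * kP n t)) h
      simpa [two_smul] using this.symm
    have : kP n t' * kP n t ≠ 0 := ((isUnit_kP n t').mul (isUnit_kP n t)).ne_zero
    rw [smul_eq_zero] at h0
    rcases h0 with h0|h0
    · norm_num at h0
    · exact this h0
  · intro h
    rw [kP_commrel, if_pos h, one_smul]

lemma trace_one_qmat (n : ℕ) : (1 : QMat n).trace = (2:ℂ)^n := by
  rw [Matrix.trace_one]
  simp [Fintype.card_fun]

lemma kP_phase_inj {n : ℕ} {t t' : Fin n → V2} {c : ℂ} (hc : c ≠ 0)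
    (h : kP n t = c • kP n t') : t = t' := by
  have h2 : kP n t * kP n t' = c • (1 : QMat n) := by
    rw [h, smul_mul_assoc, kP_mul_self]
  have h3 : (kP n t * kP n t').trace = c * (2:ℂ)^n := by
    rw [h2, Matrix.trace_smul, trace_one_qmat, smul_eq_mul]
  rw [kP, kP, kron_mul, trace_kron] at h3
  have h4 : (∏ j, (pM (t j) * pM (t' j)).trace) = c * (2:ℂ)^n := h3
  have h5 : (∏ j, (pM (t j) * pM (t' j)).trace) ≠ 0 := by
    rw [h4]
    exact mul_ne_zero hc (pow_ne_zero _ two_ne_zero)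
  funext j
  by_contra hj
  apply h5
  refine Finset.prod_eq_zero (Finset.mem_univ j) ?_
  rw [trace_pM_mul, if_neg hj]

lemma kP_inj {n : ℕ} : Function.Injective (kP n) := fun t t' h =>
  kP_phase_inj one_ne_zero (by rw [h, one_smul])

/-! ### The tuple set of a class -/

def tupSet (n : ℕ) (C : Set (QMat n)) : Set (Fin n → V2) := {t | kP n t ∈ C}

lemma image_tupSet {n : ℕ} {C : Set (QMat n)} (hC : IsMaxClass n C) :
    kP n '' tupSet n C = C := by
  apply Set.Subset.antisymm
  · rintro _ ⟨t, ht, rfl⟩; exact ht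
  · intro U hU
    obtain ⟨t, rfl⟩ := (isPauliOp_iff U).mp (hC.2.2.1 U hU).1
    exact ⟨t, hU, rfl⟩

lemma tupSet_finite {n : ℕ} {C : Set (QMat n)} (hC : IsMaxClass n C) :
    (tupSet n C).Finite :=
  Set.Finite.preimage (Set.injOn_of_injective kP_inj) hC.1

lemma tupSet_ncard {n : ℕ} {C : Set (QMat n)} (hC : IsMaxClass n C) :
    (tupSet n C).ncard = 2^n - 1 := by
  have := Set.ncard_image_of_injective (tupSet n C) (kP_inj (n := n))
  rw [image_tupSet hC] at this
  rw [← this, hC.2.1]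

lemma zero_not_mem_tupSet {n : ℕ} {C : Set (QMat n)} (hC : IsMaxClass n C) :
    (0 : Fin n → V2) ∉ tupSet n C := by
  intro h
  exact (hC.2.2.1 _ h).2 (kP_zero n)

lemma tupSet_pairwise_ortho {n : ℕ} {C : Set (QMat n)} (hC : IsMaxClass n C) :
    ∀ t ∈ tupSet n C, ∀ t' ∈ tupSet n C, BF n t t' = 0 := by
  intro t ht t' ht'
  rw [BF_apply]
  exact (kP_comm_iff n t t').mp (hC.2.2.2.1 _ ht _ ht')

/-! ### The Lagrangian submodule of a class -/

def Lag (n : ℕ) (C : Set (QMat n)) : Submodule (ZMod 2) (Fin n → V2) :=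
  Submodule.span (ZMod 2) (tupSet n C)

lemma lag_isotropic {n : ℕ} {C : Set (QMat n)} (hC : IsMaxClass n C) :
    ∀ x ∈ Lag n C, ∀ y ∈ Lag n C, BF n x y = 0 := by
  have step1 : ∀ x ∈ tupSet n C, ∀ y ∈ Lag n C, BF n x y = 0 := by
    intro x hx y hy
    have : Lag n C ≤ LinearMap.ker (BF n x) := by
      rw [Lag, Submodule.span_le]
      intro z hz
      rw [SetLike.mem_coe, LinearMap.mem_ker]
      exact tupSet_pairwise_ortho hC x hx z hz
    exact this hy
  intro x hx y hy
  have h2 : Lag n C ≤ LinearMap.ker (BF n y) := by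
    rw [Lag, Submodule.span_le]
    intro z hz
    rw [SetLike.mem_coe, LinearMap.mem_ker, BF_comm]
    exact step1 z hz y hy
  have h3 := h2 hx
  rw [LinearMap.mem_ker] at h3
  rw [BF_comm]
  exact h3

lemma finrank_V (n : ℕ) : Module.finrank (ZMod 2) (Fin n → V2) = 2 * n := by
  rw [Module.finrank_pi_fintype]
  simp [Module.finrank_prod, Module.finrank_self, mul_comm]

lemma card_submodule {n : ℕ} (L : Submodule (ZMod 2) (Fin n → V2)) :
    Nat.card L = 2 ^ Module.finrank (ZMod 2) L := by
  letI : Fintype L := Fintype.ofFinite L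
  rw [Nat.card_eq_fintype_card]
  have := Module.card_eq_pow_finrank (K := ZMod 2) (V := L)
  rwa [ZMod.card 2] at this

lemma lag_le_orthogonal {n : ℕ} {C : Set (QMat n)} (hC : IsMaxClass n C) :
    Lag n C ≤ (BF n).orthogonal (Lag n C) := by
  intro x hx
  rw [LinearMap.BilinForm.mem_orthogonal_iff]
  intro y hy
  exact lag_isotropic hC y hy x hx

lemma lag_finrank_le {n : ℕ} {C : Set (QMat n)} (hC : IsMaxClass n C) :
    Module.finrank (ZMod 2) (Lag n C) ≤ n := by
  have h1 := Submodule.finrank_mono (lag_le_orthogonal hC)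
  have h2 := LinearMap.BilinForm.finrank_orthogonal (BF_nondeg (n := n))
    (Lag n C)
  rw [finrank_V] at h2
  omega

lemma lag_card_eq {n : ℕ} {C : Set (QMat n)} :
    (Lag n C : Set (Fin n → V2)).ncard = 2 ^ Module.finrank (ZMod 2) (Lag n C) := by
  rw [← Nat.card_coe_set_eq]
  exact card_submodule _

lemma insert_tupSet_ncard {n : ℕ} {C : Set (QMat n)} (hC : IsMaxClass n C) :
    (insert 0 (tupSet n C)).ncard = 2 ^ n := by
  rw [Set.ncard_insert_of_notMem (zero_not_mem_tupSet hC) (tupSet_finite hC),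
    tupSet_ncard hC]
  have : 1 ≤ 2^n := Nat.one_le_two_pow
  omega

lemma lag_coe {n : ℕ} {C : Set (QMat n)} (hC : IsMaxClass n C) :
    (Lag n C : Set (Fin n → V2)) = insert 0 (tupSet n C) := by
  have hsub : insert 0 (tupSet n C) ⊆ (Lag n C : Set (Fin n → V2)) := by
    intro x hx
    rcases hx with rfl | hx
    · exact (Lag n C).zero_mem
    · exact Submodule.subset_span hx
  have hcardL : (Lag n C : Set (Fin n → V2)).ncard ≤ 2 ^ n := by
    rw [lag_card_eq]
    exact Nat.pow_le_pow_right (by norm_num) (lag_finrank_le hC)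
  symm
  exact Set.eq_of_subset_of_ncard_le hsub (by rw [insert_tupSet_ncard hC]; exact hcardL)

lemma lag_finrank {n : ℕ} {C : Set (QMat n)} (hC : IsMaxClass n C) :
    Module.finrank (ZMod 2) (Lag n C) = n := by
  have h1 : (2:ℕ) ^ Module.finrank (ZMod 2) (Lag n C) = 2 ^ n := by
    rw [← lag_card_eq, lag_coe hC, insert_tupSet_ncard hC]
  exact Nat.pow_right_injective (le_refl 2) h1
/-! ### Lagrangian facts -/

lemma add_self_zero {n : ℕ} (x : Fin n → V2) : x + x = 0 := by
  have h : x + x = ((1 : ZMod 2) + 1) • x := by rw [add_smul, one_smul]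
  rw [h, show (1 : ZMod 2) + 1 = 0 by decide, zero_smul]

lemma lag_orthogonal_eq {n : ℕ} {C : Set (QMat n)} (hC : IsMaxClass n C) :
    (BF n).orthogonal (Lag n C) = Lag n C := by
  symm
  apply Submodule.eq_of_le_of_finrank_le (lag_le_orthogonal hC)
  have h2 := LinearMap.BilinForm.finrank_orthogonal (BF_nondeg (n := n))
    (Lag n C)
  rw [finrank_V, lag_finrank hC] at h2
  rw [h2, lag_finrank hC]
  omega

lemma mem_lag_iff {n : ℕ} {C : Set (QMat n)} (hC : IsMaxClass n C) (x : Fin n → V2) :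
    x ∈ Lag n C ↔ x = 0 ∨ x ∈ tupSet n C := by
  rw [← SetLike.mem_coe, lag_coe hC, Set.mem_insert_iff]

lemma tup_disjoint {n : ℕ} {Ci Cj : Set (QMat n)} (hd : ClassDisjoint Ci Cj)
    {t : Fin n → V2} (h1 : t ∈ tupSet n Ci) (h2 : t ∈ tupSet n Cj) : False :=
  hd (kP n t) h1 (kP n t) h2 ⟨1, one_ne_zero, (one_smul _ _).symm⟩

lemma zmod_submodule_top {p : Submodule (ZMod 2) (ZMod 2)} (hp : p ≠ ⊥) : p = ⊤ := by
  obtain ⟨x, hxp, hx⟩ := Submodule.exists_mem_ne_zero_of_ne_bot hp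
  have hx1 : x = 1 := (zmod2_cases x).resolve_left hx
  rw [Submodule.eq_top_iff']
  intro y
  have : y • x ∈ p := Submodule.smul_mem p y hxp
  rwa [hx1, smul_eq_mul, mul_one] at this

/-- If `t` is not orthogonal to all of `Lag n Cj`, the kernel of the restricted form
has corank one. -/
lemma ker_rank {n : ℕ} {Cj : Set (QMat n)} (hj : IsMaxClass n Cj) {t : Fin n → V2}
    (hne : (BF n t).domRestrict (Lag n Cj) ≠ 0) :
    Module.finrank (ZMod 2) (Lag n Cj ⊓ LinearMap.ker (BF n t) :
      Submodule (ZMod 2) (Fin n → V2)) = n - 1 := by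
  set φ := (BF n t).domRestrict (Lag n Cj) with hφ
  have hrange : LinearMap.range φ = ⊤ :=
    zmod_submodule_top (fun h => hne (LinearMap.range_eq_bot.mp h))
  have hrn := LinearMap.finrank_range_add_finrank_ker φ
  rw [hrange, finrank_top, Module.finrank_self, lag_finrank hj] at hrn
  have hmap : Submodule.map (Lag n Cj).subtype (LinearMap.ker φ)
      = Lag n Cj ⊓ LinearMap.ker (BF n t) := by
    rw [hφ, LinearMap.ker_domRestrict]
    exact Submodule.map_comap_subtype _ _
  rw [← hmap, Submodule.finrank_map_subtype_eq]
  omega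

/-- `t ∈ tupSet n Ci` is not orthogonal to all of `Lag n Cj`. -/
lemma not_ortho_all {n : ℕ} {Ci Cj : Set (QMat n)} (hi : IsMaxClass n Ci)
    (hj : IsMaxClass n Cj) (hd : ClassDisjoint Ci Cj) {t : Fin n → V2}
    (ht : t ∈ tupSet n Ci) :
    (BF n t).domRestrict (Lag n Cj) ≠ 0 := by
  intro h0
  have htj : t ∈ (BF n).orthogonal (Lag n Cj) := by
    rw [LinearMap.BilinForm.mem_orthogonal_iff]
    intro y hy
    rw [BF_comm]
    have := DFunLike.congr_fun h0 ⟨y, hy⟩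
    simpa using this
  rw [lag_orthogonal_eq hj, mem_lag_iff hj] at htj
  rcases htj with rfl | htj
  · exact zero_not_mem_tupSet hi ht
  · exact tup_disjoint hd ht htj

/-- For two disjoint maximal commuting Pauli classes `Ci`, `Cj` in `d = 2 ^ n`,
(a) every `U ∈ Ci` commutes with exactly `2 ^ (n - 1) - 1` operators of `Cj`, and
(b) this commuting subset of `Cj` determines `U` up to phase. -/
theorem commutant_in_other_class (n : ℕ) (Ci Cj : Set (QMat n))
    (hi : IsMaxClass n Ci) (hj : IsMaxClass n Cj) (hd : ClassDisjoint Ci Cj) :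
    (∀ U ∈ Ci, ({V ∈ Cj | U * V = V * U}).ncard = 2 ^ (n - 1) - 1) ∧
    (∀ U ∈ Ci, ∀ V ∈ Ci,
      {W ∈ Cj | U * W = W * U} = {W ∈ Cj | V * W = W * V} → PhaseEq U V) := by
  constructor
  · -- part (a)
    intro U hU
    obtain ⟨t, rfl⟩ := (isPauliOp_iff U).mp (hi.2.2.1 U hU).1
    have ht : t ∈ tupSet n Ci := hU
    set K' : Submodule (ZMod 2) (Fin n → V2) := Lag n Cj ⊓ LinearMap.ker (BF n t) with hK'
    have hK'rank : Module.finrank (ZMod 2) K' = n - 1 :=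
      ker_rank hj (not_ortho_all hi hj hd ht)
    have hcardK' : (K' : Set (Fin n → V2)).ncard = 2 ^ (n - 1) := by
      rw [← Nat.card_coe_set_eq]
      have := card_submodule K'
      rw [hK'rank] at this
      exact this
    have hset : {V ∈ Cj | kP n t * V = V * kP n t} =
        kP n '' {s ∈ tupSet n Cj | BF n t s = 0} := by
      ext V
      constructor
      · rintro ⟨hV, hcom⟩
        obtain ⟨s, rfl⟩ := (isPauliOp_iff V).mp (hj.2.2.1 V hV).1
        exact ⟨s, ⟨hV, (kP_comm_iff n t s).mp hcom⟩, rfl⟩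
      · rintro ⟨s, ⟨hs, hbf⟩, rfl⟩
        exact ⟨hs, (kP_comm_iff n t s).mpr hbf⟩
    have hset2 : {s ∈ tupSet n Cj | BF n t s = 0} = (K' : Set (Fin n → V2)) \ {0} := by
      ext s
      simp only [Set.mem_setOf_eq, Set.mem_diff, SetLike.mem_coe, hK',
        Submodule.mem_inf, LinearMap.mem_ker, Set.mem_singleton_iff]
      constructor
      · rintro ⟨hs, hbf⟩
        refine ⟨⟨Submodule.subset_span hs, hbf⟩, ?_⟩
        rintro rfl
        exact zero_not_mem_tupSet hj hs
      · rintro ⟨⟨hsL, hbf⟩, hs0⟩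
        rcases (mem_lag_iff hj s).mp hsL with rfl | hs
        · exact absurd rfl hs0
        · exact ⟨hs, hbf⟩
    rw [hset, Set.ncard_image_of_injective _ kP_inj, hset2,
      Set.ncard_diff_singleton_of_mem (by simp), hcardK']
  · -- part (b)
    intro U hU V hV hsets
    obtain ⟨t, rfl⟩ := (isPauliOp_iff U).mp (hi.2.2.1 U hU).1
    obtain ⟨t', rfl⟩ := (isPauliOp_iff V).mp (hi.2.2.1 V hV).1
    have ht : t ∈ tupSet n Ci := hU
    have ht' : t' ∈ tupSet n Ci := hV
    have key : ∀ s ∈ tupSet n Cj, BF n (t + t') s = 0 := by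
      intro s hs
      have hmem := Set.ext_iff.mp hsets (kP n s)
      simp only [Set.mem_setOf_eq] at hmem
      have hiff : (omg t s = 0) ↔ (omg t' s = 0) := by
        rw [← kP_comm_iff n t s, ← kP_comm_iff n t' s]
        constructor
        · intro h; exact (hmem.mp ⟨hs, h⟩).2
        · intro h; exact (hmem.mpr ⟨hs, h⟩).2
      have heq : BF n t s = BF n t' s := by
        rw [BF_apply, BF_apply]
        rcases zmod2_cases (omg t s) with h1|h1 <;> rcases zmod2_cases (omg t' s) with h2|h2
        · rw [h1, h2]
        · exact absurd (hiff.mp h1) (by rw [h2]; decide)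
        · exact absurd (hiff.mpr h2) (by rw [h1]; decide)
        · rw [h1, h2]
      rw [map_add, LinearMap.add_apply, heq]
      exact CharTwo.add_self_eq_zero (BF n t' s)
    have horth : t + t' ∈ (BF n).orthogonal (Lag n Cj) := by
      rw [LinearMap.BilinForm.mem_orthogonal_iff]
      intro y hy
      rw [BF_comm]
      have hker : Lag n Cj ≤ LinearMap.ker (BF n (t + t')) := by
        rw [Lag, Submodule.span_le]
        intro z hz
        rw [SetLike.mem_coe, LinearMap.mem_ker]
        exact key z hz
      exact hker hy
    rw [lag_orthogonal_eq hj] at horth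
    have hmemi : t + t' ∈ Lag n Ci :=
      Submodule.add_mem _ (Submodule.subset_span ht) (Submodule.subset_span ht')
    by_cases h0 : t + t' = 0
    · have htt : t = t' := by
        have h1 : t + t' + t' = t' := by rw [h0, zero_add]
        rwa [add_assoc, add_self_zero, add_zero] at h1
      rw [htt]
      exact ⟨1, one_ne_zero, (one_smul _ _).symm⟩
    · exfalso
      have h1 := ((mem_lag_iff hj _).mp horth).resolve_left h0
      have h2 := ((mem_lag_iff hi _).mp hmemi).resolve_left h0
      exact tup_disjoint hd h2 h1
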